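/- arXiv:2102.02517 — 6 statements merged into one kernel-verified Lean document; each statement's English description precedes it below -/
import Mathlib

section
/- Let m ≥ 1, let a_1, …, a_m be complex numbers, and let b_1, …, b_m be pairwise distinct complex numbers of modulus 1. If the sequence n ↦ Σ_{k=1}^m a_k · b_k^n tends to 0 as n → ∞, then a_k = 0 for every k. -/
open Filter Finset

/-- Cesàro mean of powers of a unimodular number. -/
lemma cesaro_pow (c : ℂ) (hc : ‖c‖ = 1) :
    Tendsto (fun N : ℕ => (N⁻¹ : ℝ) • ∑ n ∈ Finset.range N, c ^ n) atTop
      (nhds (if c = 1 then 1 else 0)) := by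
  by_cases h1 : c = 1
  · simp only [h1, if_pos, one_pow, Finset.sum_const, Finset.card_range, nsmul_eq_mul, mul_one]
    have : ∀ᶠ N : ℕ in atTop,
        (N⁻¹ : ℝ) • ((N : ℂ)) = (1 : ℂ) := by
      filter_upwards [Ici_mem_atTop 1] with N hN
      have hN0 : (N : ℂ) ≠ 0 := Nat.cast_ne_zero.2 (Nat.one_le_iff_ne_zero.1 hN)
      rw [Complex.real_smul]
      push_cast
      exact inv_mul_cancel₀ hN0
    exact Tendsto.congr' (by filter_upwards [this] with N hN; exact hN.symm)
      tendsto_const_nhds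
  · rw [if_neg h1]
    rw [tendsto_zero_iff_norm_tendsto_zero]
    have hbound : ∀ N : ℕ,
        ‖(N⁻¹ : ℝ) • ∑ n ∈ Finset.range N, c ^ n‖ ≤ (N : ℝ)⁻¹ * (2 / ‖c - 1‖) := by
      intro N
      rw [geom_sum_eq h1, norm_smul]
      have : ‖(c ^ N - 1) / (c - 1)‖ ≤ 2 / ‖c - 1‖ := by
        rw [norm_div]
        apply div_le_div_of_nonneg_right _ (by
          simpa [sub_ne_zero] using (norm_pos_iff.2 (sub_ne_zero.2 h1)))
        · calc ‖c ^ N - 1‖ ≤ ‖c ^ N‖ + ‖(1 : ℂ)‖ := norm_sub_le _ _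
            _ = 2 := by
              rw [norm_pow]
              have : ‖c‖ = 1 := hc
              rw [this]; norm_num
      calc ‖(N⁻¹ : ℝ)‖ * ‖(c ^ N - 1) / (c - 1)‖
          ≤ ‖(N⁻¹ : ℝ)‖ * (2 / ‖c - 1‖) := by
            apply mul_le_mul_of_nonneg_left this (norm_nonneg _)
        _ = (N : ℝ)⁻¹ * (2 / ‖c - 1‖) := by
            rw [Real.norm_eq_abs, abs_inv, Nat.abs_cast]
    apply squeeze_zero (fun N => norm_nonneg _) hbound
    rw [show (0 : ℝ) = 0 * (2 / ‖c - 1‖) by ring]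
    exact (tendsto_inv_atTop_nhds_zero_nat).mul_const _

/-- If `a₁,…,a_m` are complex numbers and `b₁,…,b_m` are pairwise distinct complex
numbers of modulus `1` such that `∑ k, a k * b k ^ n → 0` as `n → ∞`, then all `a k = 0`. -/
theorem stmt0 (m : ℕ) (hm : 1 ≤ m) (a b : Fin m → ℂ)
    (hb : ∀ k, ‖b k‖ = 1)
    (hdist : Function.Injective b)
    (h : Filter.Tendsto (fun n : ℕ => ∑ k, a k * (b k) ^ n) Filter.atTop (nhds 0)) :
    ∀ k, a k = 0 := by
  intro j
  have hbj0 : b j ≠ 0 := by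
    intro hz
    have := hb j
    rw [hz] at this
    simp at this
  -- the twisted sequence T n = S n / (b j)^n tends to 0
  set T : ℕ → ℂ := fun n => ∑ k, a k * (b k / b j) ^ n with hT
  have hTeq : ∀ n, T n = (∑ k, a k * (b k) ^ n) / (b j) ^ n := by
    intro n
    rw [hT]
    simp only [div_pow, Finset.sum_div, mul_div_assoc]
  have hT0 : Tendsto T atTop (nhds 0) := by
    rw [tendsto_zero_iff_norm_tendsto_zero]
    have : ∀ n, ‖T n‖ = ‖∑ k, a k * (b k) ^ n‖ := by
      intro n
      rw [hTeq, norm_div, norm_pow]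
      have : ‖b j‖ = 1 := hb j
      rw [this]; simp
    simp only [this]
    exact tendsto_zero_iff_norm_tendsto_zero.1 h
  -- Cesàro mean tends to 0
  have hC0 : Tendsto (fun N : ℕ => (N⁻¹ : ℝ) • ∑ n ∈ Finset.range N, T n)
      atTop (nhds 0) := hT0.cesaro_smul
  -- Cesàro mean also tends to a j
  have hCaj : Tendsto (fun N : ℕ => (N⁻¹ : ℝ) • ∑ n ∈ Finset.range N, T n)
      atTop (nhds (a j)) := by
    have key : ∀ N : ℕ, (N⁻¹ : ℝ) • ∑ n ∈ Finset.range N, T n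
        = ∑ k, a k * ((N⁻¹ : ℝ) • ∑ n ∈ Finset.range N, (b k / b j) ^ n) := by
      intro N
      rw [hT, Finset.sum_comm, Finset.smul_sum]
      congr 1
      ext k
      rw [← Finset.mul_sum, mul_smul_comm]
    simp only [key]
    have lim_k : ∀ k, Tendsto
        (fun N : ℕ => a k * ((N⁻¹ : ℝ) • ∑ n ∈ Finset.range N, (b k / b j) ^ n))
        atTop (nhds (a k * (if b k / b j = 1 then 1 else 0))) := by
      intro k
      have habs : ‖b k / b j‖ = 1 := by
        rw [norm_div, hb k, hb j]; norm_num
      exact (cesaro_pow _ habs).const_mul _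
    have htot := tendsto_finset_sum Finset.univ (fun k (_ : k ∈ Finset.univ) => lim_k k)
    have hiff : ∀ k : Fin m, (b k / b j = 1) ↔ k = j := by
      intro k
      constructor
      · intro hk
        exact hdist (by field_simp at hk; exact hk)
      · rintro rfl; field_simp
    have hval : (∑ k, a k * (if b k / b j = 1 then (1:ℂ) else 0)) = a j := by
      simp only [hiff]
      simp [Finset.sum_ite_eq']
    rw [hval] at htot
    exact htot
  exact tendsto_nhds_unique hCaj hC0
end

section
/- Let m ≥ 1, let q_1, …, q_m be polynomial functions ℕ → ℂ (restrictions to ℕ of complex polynomials), and let b_1, …, b_m be pairwise distinct complex numbers of modulus 1. If Σ_{k=1}^m q_k(n) · b_k^n tends to 0 as n → ∞, then every polynomial q_k is identically zero. -/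
open Polynomial Filter

private lemma single_poly (p : ℂ[X]) (b : ℂ) (hb : ‖b‖ = 1)
    (h : Tendsto (fun n : ℕ => p.eval (n : ℂ) * b ^ n) atTop (nhds 0)) : p = 0 := by
  by_contra hp
  have hnorm : Tendsto (fun n : ℕ => ‖p.eval (n : ℂ)‖) atTop (nhds 0) := by
    have := h.norm
    simp only [norm_mul, norm_pow, norm_zero] at this
    have hb' : ∀ n : ℕ, ‖p.eval (n:ℂ)‖ * ‖b‖ ^ n = ‖p.eval (n:ℂ)‖ := by
      intro n
      rw [show ‖b‖ = 1 from hb, one_pow, mul_one]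
    simpa only [hb'] using this
  rcases lt_or_ge 0 p.degree with hd | hd
  · have hz : Tendsto (fun n : ℕ => ‖(n : ℂ)‖) atTop atTop := by
      simpa using tendsto_natCast_atTop_atTop (R := ℝ)
    have htop := p.tendsto_norm_atTop hd hz
    exact not_tendsto_nhds_of_tendsto_atTop htop 0 hnorm
  · rw [Polynomial.eq_C_of_degree_le_zero hd] at hp hnorm
    simp only [eval_C] at hnorm
    have := tendsto_nhds_unique hnorm tendsto_const_nhds
    exact hp (by simpa using this.symm)

private lemma compND (p : ℂ[X]) : (p.comp (X + 1)).natDegree = p.natDegree := by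
  have hX1 : (X + (1 : ℂ[X])) = X + C 1 := by rw [map_one]
  have hXd : (X + (1 : ℂ[X])).natDegree = 1 := by
    rw [hX1]; exact Polynomial.natDegree_X_add_C 1
  rw [Polynomial.natDegree_comp, hXd, mul_one]

private lemma compLC (p : ℂ[X]) : (p.comp (X + 1)).leadingCoeff = p.leadingCoeff := by
  have hX1 : (X + (1 : ℂ[X])) = X + C 1 := by rw [map_one]
  have hXd : (X + (1 : ℂ[X])).natDegree = 1 := by
    rw [hX1]; exact Polynomial.natDegree_X_add_C 1
  rw [Polynomial.leadingCoeff_comp (by rw [hXd]; norm_num), hX1,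
    Polynomial.leadingCoeff_X_add_C, one_pow, mul_one]

private lemma T_inj (c b : ℂ) (hbc : b ≠ c) (p : ℂ[X])
    (h : b • p.comp (X + 1) - c • p = 0) : p = 0 := by
  by_contra hp
  have hcomp := compND p
  have hlead : (p.comp (X + 1)).coeff p.natDegree = p.leadingCoeff := by
    rw [← hcomp]
    simpa [Polynomial.coeff_natDegree] using compLC p
  have := congrArg (fun r => Polynomial.coeff r p.natDegree) h
  simp only [Polynomial.coeff_sub, Polynomial.coeff_smul, smul_eq_mul, Polynomial.coeff_zero,
    hlead, Polynomial.coeff_natDegree] at this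
  have : (b - c) * p.leadingCoeff = 0 := by linear_combination this
  rcases mul_eq_zero.1 this with h1 | h1
  · exact hbc (sub_eq_zero.1 h1)
  · exact hp (Polynomial.leadingCoeff_eq_zero.1 h1)

private lemma main_aux : ∀ m : ℕ, ∀ q : Fin m → ℂ[X], ∀ b : Fin m → ℂ,
    (∀ k, ‖b k‖ = 1) → Function.Injective b →
    Tendsto (fun n : ℕ => ∑ k, (q k).eval (n : ℂ) * (b k) ^ n) atTop (nhds 0) →
    ∀ k, q k = 0 := by
  intro m
  induction m with
  | zero => exact fun q b _ _ _ k => k.elim0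
  | succ m ih =>
    intro q b hb hdist h
    have hlast_case : ∀ q' : Fin (m+1) → ℂ[X], q' (Fin.last m) = 0 →
        Tendsto (fun n : ℕ => ∑ k, (q' k).eval (n:ℂ) * b k ^ n) atTop (nhds 0) →
        ∀ k, q' k = 0 := by
      intro q' hlast h'
      have heq : (fun n : ℕ => ∑ k, (q' k).eval (n:ℂ) * b k ^ n)
          = fun n : ℕ => ∑ k : Fin m, (q' (k.castSucc)).eval (n:ℂ) * b (k.castSucc) ^ n := by
        funext n
        rw [Fin.sum_univ_castSucc, hlast]
        simp
      rw [heq] at h'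
      have hz := ih (fun k => q' k.castSucc) (fun k => b k.castSucc)
        (fun k => hb _) (hdist.comp (Fin.castSucc_injective m)) h'
      intro k
      exact Fin.lastCases hlast (fun j => hz j) k
    have key : ∀ d : ℕ, ∀ q' : Fin (m+1) → ℂ[X], (q' (Fin.last m)).degree < (d : ℕ) →
        Tendsto (fun n : ℕ => ∑ k, (q' k).eval (n:ℂ) * b k ^ n) atTop (nhds 0) →
        ∀ k, q' k = 0 := by
      intro d
      induction d with
      | zero =>
        intro q' hd h'
        exact hlast_case q' (Polynomial.degree_eq_bot.1 (Nat.WithBot.lt_zero_iff.1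
          (by exact_mod_cast hd))) h'
      | succ d ihd =>
        intro q' hd h'
        by_cases h0 : q' (Fin.last m) = 0
        · exact hlast_case q' h0 h'
        · set c := b (Fin.last m) with hc
          set Q : Fin (m+1) → ℂ[X] :=
            fun k => b k • (q' k).comp (X+1) - c • q' k with hQdef
          have hsum : (fun n : ℕ => ∑ k, (Q k).eval (n:ℂ) * b k ^ n)
              = fun n : ℕ => (∑ k, (q' k).eval (((n+1 : ℕ)):ℂ) * b k ^ (n+1))
                - c * ∑ k, (q' k).eval (n:ℂ) * b k ^ n := by
            funext n
            rw [Finset.mul_sum, ← Finset.sum_sub_distrib]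
            refine Finset.sum_congr rfl fun k _ => ?_
            simp only [hQdef, Polynomial.eval_sub, Polynomial.eval_smul, smul_eq_mul,
              Polynomial.eval_comp, Polynomial.eval_add, Polynomial.eval_X, Polynomial.eval_one]
            push_cast
            ring
          have hQt : Tendsto (fun n : ℕ => ∑ k, (Q k).eval (n:ℂ) * b k ^ n) atTop (nhds 0) := by
            rw [hsum]
            have h1 : Tendsto (fun n : ℕ => ∑ k, (q' k).eval (((n+1:ℕ)):ℂ) * b k ^ (n+1))
                atTop (nhds 0) := h'.comp (tendsto_add_atTop_nat 1)
            simpa using h1.sub (h'.const_mul c)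
          have hdeg : (Q (Fin.last m)).degree < (d : ℕ) := by
            have hcomp := compND (q' (Fin.last m))
            have hlc := compLC (q' (Fin.last m))
            have hcne : (q' (Fin.last m)).comp (X+1) ≠ 0 := fun hh => h0 (by
              apply Polynomial.leadingCoeff_eq_zero.1
              rw [← hlc, hh, Polynomial.leadingCoeff_zero])
            have hdegeq : ((q' (Fin.last m)).comp (X+1)).degree = (q' (Fin.last m)).degree := by
              rw [Polynomial.degree_eq_natDegree hcne, Polynomial.degree_eq_natDegree h0, hcomp]
            have hlt := Polynomial.degree_sub_lt hdegeq hcne hlc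
            have hQlast : Q (Fin.last m) = c • ((q' (Fin.last m)).comp (X+1) - q' (Fin.last m)) := by
              rw [hQdef, smul_sub, hc]
            have h2 : (Q (Fin.last m)).degree < (q' (Fin.last m)).degree := by
              calc (Q (Fin.last m)).degree
                  ≤ ((q' (Fin.last m)).comp (X+1) - q' (Fin.last m)).degree := by
                    rw [hQlast]; exact Polynomial.degree_smul_le _ _
                _ < (q' (Fin.last m)).degree := hdegeq ▸ hlt
            refine lt_of_lt_of_le h2 ?_
            rw [Polynomial.degree_eq_natDegree h0]
            exact_mod_cast Nat.lt_succ_iff.1 (by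
              have := hd
              rw [Polynomial.degree_eq_natDegree h0] at this
              exact_mod_cast this)
          have hQ0 := ihd Q hdeg hQt
          have hne : ∀ k : Fin m, q' k.castSucc = 0 := fun k =>
            T_inj c (b k.castSucc)
              (fun hcon => (Fin.castSucc_lt_last k).ne (hdist hcon)) _ (hQ0 _)
          have hlast0 : q' (Fin.last m) = 0 := by
            apply single_poly _ (b (Fin.last m)) (hb _)
            have heq : (fun n : ℕ => (q' (Fin.last m)).eval (n:ℂ) * b (Fin.last m) ^ n)
                = fun n : ℕ => ∑ k, (q' k).eval (n:ℂ) * b k ^ n := by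
              funext n
              rw [Fin.sum_univ_castSucc]
              simp [hne]
            rw [heq]
            exact h'
          intro k
          exact Fin.lastCases hlast0 hne k
    exact key ((q (Fin.last m)).natDegree + 1) q
      (lt_of_le_of_lt (Polynomial.degree_le_natDegree) (by exact_mod_cast Nat.lt_succ_self _)) h

/-- If `q₁,…,q_m` are complex polynomials and `b₁,…,b_m` are pairwise distinct complex
numbers of modulus `1` such that `∑ k, q k (n) * b k ^ n → 0` as `n → ∞`, then all
polynomials `q k` are identically zero. -/
theorem stmt1 (m : ℕ) (hm : 1 ≤ m) (q : Fin m → Polynomial ℂ) (b : Fin m → ℂ)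
    (hb : ∀ k, ‖b k‖ = 1)
    (hdist : Function.Injective b)
    (h : Filter.Tendsto (fun n : ℕ => ∑ k, (q k).eval (n : ℂ) * (b k) ^ n)
      Filter.atTop (nhds 0)) :
    ∀ k, q k = 0 :=
  main_aux m q b hb hdist h
end

section
/- Let V be a finite-dimensional real inner product space, let (α_i)_{i∈I} be a basis of the dual space V*, and let (e_i)_{i∈I} ⊂ V be the dual basis, i.e. α_i(e_j) = δ_{ij}. Then there exists a constant c > 0, depending only on the basis, such that: for all X, H ∈ V, if α_i(H) ≥ 0 for every i and ⟨e_i, H − X⟩ ≤ 0 for every i, then ‖H‖ ≤ c‖X‖. -/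
/-- Let `(α_i)` be a basis of the dual of a finite-dimensional real inner product
space `V` and `(e_i)` the dual basis of `V`.  There is a constant `c > 0`, depending
only on the basis, such that whenever `α_i(H) ≥ 0` for all `i` and `⟨e_i, H - X⟩ ≤ 0`
for all `i`, one has `‖H‖ ≤ c ‖X‖`. -/
theorem stmt6 {V : Type*} [NormedAddCommGroup V] [InnerProductSpace ℝ V]
    [FiniteDimensional ℝ V]
    {ι : Type*} [DecidableEq ι] (α : Module.Basis ι ℝ (Module.Dual ℝ V)) (e : ι → V)
    (hdual : ∀ i j, α i (e j) = if i = j then (1 : ℝ) else 0) :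
    ∃ c : ℝ, 0 < c ∧ ∀ X H : V,
      (∀ i, 0 ≤ α i H) → (∀ i, (inner ℝ (e i) (H - X) : ℝ) ≤ 0) → ‖H‖ ≤ c * ‖X‖ := by
  haveI : Fintype ι := FiniteDimensional.fintypeBasisIndex α
  set A : ι → V →L[ℝ] ℝ := fun i => LinearMap.toContinuousLinearMap (α i) with hA
  have hAα : ∀ i (v : V), A i v = α i v := fun i v => rfl
  -- key representation: H = ∑ i, α i H • e i
  have key : ∀ H : V, H = ∑ i, α i H • e i := by
    intro H
    have hw : ∀ φ : Module.Dual ℝ V, φ (H - ∑ i, α i H • e i) = 0 := by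
      intro φ
      have hαz : ∀ j, α j (H - ∑ i, α i H • e i) = 0 := by
        intro j
        simp only [map_sub, map_sum, map_smul, hdual, smul_eq_mul, mul_ite, mul_one, mul_zero]
        rw [Finset.sum_ite_eq Finset.univ j (fun i => α i H)]
        simp
      calc φ (H - ∑ i, α i H • e i)
          = (∑ j, α.repr φ j • α j) (H - ∑ i, α i H • e i) := by rw [α.sum_repr φ]
        _ = ∑ j, α.repr φ j • (α j (H - ∑ i, α i H • e i)) := by
            rw [LinearMap.sum_apply]; simp only [LinearMap.smul_apply]
        _ = 0 := by simp [hαz]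
    have := (Module.forall_dual_apply_eq_zero_iff ℝ (H - ∑ i, α i H • e i)).mp hw
    exact (sub_eq_zero.mp this)
  refine ⟨(∑ i, ‖A i‖ * ‖e i‖) + 1, by positivity, fun X H h1 h2 => ?_⟩
  set c : ℝ := (∑ i, ‖A i‖ * ‖e i‖) + 1 with hc
  rcases eq_or_lt_of_le (norm_nonneg H) with hH | hH
  · rw [← hH]; positivity
  have hnormsq : ‖H‖ * ‖H‖ = ∑ i, α i H * (inner ℝ (e i) H : ℝ) := by
    calc ‖H‖ * ‖H‖ = (inner ℝ H H : ℝ) := (real_inner_self_eq_norm_mul_norm H).symm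
      _ = (inner ℝ (∑ i, α i H • e i) H : ℝ) := by rw [← key H]
      _ = ∑ i, α i H * (inner ℝ (e i) H : ℝ) := by
          rw [sum_inner]; simp [real_inner_smul_left]
  have step1 : ‖H‖ * ‖H‖ ≤ ∑ i, α i H * (inner ℝ (e i) X : ℝ) := by
    rw [hnormsq]
    apply Finset.sum_le_sum
    intro i _
    have : (inner ℝ (e i) H : ℝ) ≤ inner ℝ (e i) X := by
      have := h2 i
      rw [inner_sub_right] at this
      linarith
    exact mul_le_mul_of_nonneg_left this (h1 i)
  have step2 : ∑ i, α i H * (inner ℝ (e i) X : ℝ) ≤ (∑ i, ‖A i‖ * ‖e i‖) * (‖H‖ * ‖X‖) := by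
    rw [Finset.sum_mul]
    apply Finset.sum_le_sum
    intro i _
    have h3 : α i H ≤ ‖A i‖ * ‖H‖ := by
      have := (A i).le_opNorm H
      calc α i H = A i H := (hAα i H).symm
        _ ≤ |A i H| := le_abs_self _
        _ ≤ ‖A i‖ * ‖H‖ := by rwa [← Real.norm_eq_abs]
    have h4 : (inner ℝ (e i) X : ℝ) ≤ ‖e i‖ * ‖X‖ := real_inner_le_norm _ _
    have h3' : 0 ≤ ‖A i‖ * ‖H‖ := by positivity
    calc α i H * (inner ℝ (e i) X : ℝ)
        ≤ α i H * (‖e i‖ * ‖X‖) := by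
          rcases le_or_gt (inner ℝ (e i) X : ℝ) ((‖e i‖ : ℝ) * ‖X‖) with h | h
          · exact mul_le_mul_of_nonneg_left h (h1 i)
          · linarith
      _ ≤ (‖A i‖ * ‖H‖) * (‖e i‖ * ‖X‖) := by
          apply mul_le_mul_of_nonneg_right h3; positivity
      _ = ‖A i‖ * ‖e i‖ * (‖H‖ * ‖X‖) := by ring
  have hfin : ‖H‖ * ‖H‖ ≤ c * ‖X‖ * ‖H‖ := by
    have hx : (∑ i, ‖A i‖ * ‖e i‖) * (‖H‖ * ‖X‖) ≤ c * ‖X‖ * ‖H‖ := by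
      have : (0:ℝ) ≤ ‖H‖ * ‖X‖ := by positivity
      rw [hc]; nlinarith [norm_nonneg X, norm_nonneg H]
    linarith [step1.trans step2]
  exact le_of_mul_le_mul_right (by linarith) hH
end

section
/- Let V be a finite-dimensional real inner product space, let (α_i)_{i∈I} be a basis of V*, and let (e_i)_{i∈I} ⊂ V be the dual basis. If H ∈ V satisfies α_i(H) ≥ 0 for every i and ⟨e_i, H⟩ ≤ 0 for every i, then H = 0. -/
/-- Let `(α_i)` be a basis of the dual of a finite-dimensional real inner product
space `V` and `(e_i)` the dual basis of `V`.  If `α_i(H) ≥ 0` and `⟨e_i, H⟩ ≤ 0` for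
every `i`, then `H = 0`. -/
theorem stmt7 {V : Type*} [NormedAddCommGroup V] [InnerProductSpace ℝ V]
    [FiniteDimensional ℝ V]
    {ι : Type*} [DecidableEq ι] (α : Module.Basis ι ℝ (Module.Dual ℝ V)) (e : ι → V)
    (hdual : ∀ i j, α i (e j) = if i = j then (1 : ℝ) else 0)
    (H : V) (h1 : ∀ i, 0 ≤ α i H) (h2 : ∀ i, (inner ℝ (e i) H : ℝ) ≤ 0) :
    H = 0 := by
  haveI : Fintype ι := FiniteDimensional.fintypeBasisIndex α
  set f : Module.Dual ℝ V := ((innerSL ℝ H : V →L[ℝ] ℝ) : V →ₗ[ℝ] ℝ) with hf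
  have hrepr : ∀ j, α.repr f j = inner ℝ H (e j) := by
    intro j
    have h := congrArg (fun g => g (e j)) (α.sum_repr f)
    simp only [LinearMap.coe_sum, Finset.sum_apply, LinearMap.smul_apply, hdual,
      smul_eq_mul, mul_ite, mul_one, mul_zero, Finset.sum_ite_eq',
      Finset.mem_univ, if_true] at h
    simpa [hf] using h
  have key : (inner ℝ H H : ℝ) = ∑ i, (inner ℝ H (e i) : ℝ) * α i H := by
    have h := congrArg (fun g => g H) (α.sum_repr f)
    simp only [LinearMap.coe_sum, Finset.sum_apply, LinearMap.smul_apply,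
      smul_eq_mul, hrepr] at h
    simpa [hf] using h.symm
  have hle : (inner ℝ H H : ℝ) ≤ 0 := by
    rw [key]
    apply Finset.sum_nonpos
    intro i _
    have := h2 i
    rw [real_inner_comm] at this
    exact mul_nonpos_of_nonpos_of_nonneg this (h1 i)
  exact real_inner_self_nonpos.mp hle
end

section
/- Let V be a finite-dimensional real inner product space and let (v_α)_{α∈I} be a basis of V which is obtuse, i.e. ⟨v_α, v_β⟩ ≤ 0 for all α ≠ β. Let (w_α)_{α∈I} be the dual basis with respect to the inner product, i.e. ⟨v_α, w_β⟩ = δ_{αβ}. Let I = I₁ ⊔ I₂ be a partition with I₂ nonempty, and let X ∈ V satisfy ⟨v_α, X⟩ ≥ 0 for all α ∈ I. Then there is no H ∈ V satisfying simultaneously: ⟨v_α, H⟩ > 0 for all α ∈ I₁; ⟨v_α, H⟩ ≤ 0 for all α ∈ I₂; ⟨w_α, H − X⟩ > 0 for all α ∈ I₂; and ⟨w_α, H − X⟩ ≤ 0 for all α ∈ I₁. -/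
/-- Emptiness of `C(P,Q,R,X)` for `X` in the closure of the positive chamber:
for an obtuse basis `(v_α)` with dual basis `(w_α)`, a partition `I = I₁ ⊔ I₂` with
`I₂ ≠ ∅`, and `X` with `⟨v_α, X⟩ ≥ 0` for all `α`, there is no `H` with
`⟨v_α,H⟩ > 0` on `I₁`, `⟨v_α,H⟩ ≤ 0` on `I₂`, `⟨w_α,H-X⟩ > 0` on `I₂` and
`⟨w_α,H-X⟩ ≤ 0` on `I₁`. -/
theorem stmt8 {V : Type*} [NormedAddCommGroup V] [InnerProductSpace ℝ V]
    [FiniteDimensional ℝ V]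
    {ι : Type*} [DecidableEq ι] (b : Module.Basis ι ℝ V)
    (hobtuse : ∀ α β, α ≠ β → (inner ℝ (b α) (b β) : ℝ) ≤ 0)
    (w : ι → V)
    (hdual : ∀ α β, (inner ℝ (b α) (w β) : ℝ) = if α = β then 1 else 0)
    (s : Set ι) (hs : sᶜ.Nonempty)
    (X : V) (hX : ∀ α, 0 ≤ (inner ℝ (b α) X : ℝ)) :
    ¬ ∃ H : V,
      (∀ α ∈ s, 0 < (inner ℝ (b α) H : ℝ)) ∧
      (∀ α ∉ s, (inner ℝ (b α) H : ℝ) ≤ 0) ∧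
      (∀ α ∉ s, 0 < (inner ℝ (w α) (H - X) : ℝ)) ∧
      (∀ α ∈ s, (inner ℝ (w α) (H - X) : ℝ) ≤ 0) := by
  classical
  haveI : Fintype ι := FiniteDimensional.fintypeBasisIndex b
  rintro ⟨H, h1, h2, h3, h4⟩
  set Y : V := H - X with hYdef
  set c : ι → ℝ := fun α => inner ℝ (w α) Y with hc
  have hdual' : ∀ α β : ι, (inner ℝ (w α) (b β) : ℝ) = if β = α then 1 else 0 := by
    intro α β
    rw [real_inner_comm]
    exact hdual β α
  -- the coordinates of Y in the basis b are exactly c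
  have hYsum : Y = ∑ α : ι, c α • b α := by
    have hrep : ∀ α, c α = b.repr Y α := by
      intro α
      show (inner ℝ (w α) Y : ℝ) = b.repr Y α
      conv_lhs => rw [← b.sum_repr Y]
      rw [inner_sum]
      simp only [real_inner_smul_right, hdual']
      rw [Finset.sum_eq_single α]
      · simp
      · intro β _ hβ; simp [hβ]
      · simp
    conv_lhs => rw [← b.sum_repr Y]
    refine Finset.sum_congr rfl fun α _ => ?_
    rw [hrep α]
  set t : Finset ι := Finset.univ.filter (fun α => α ∉ s) with ht
  set Z : V := ∑ α ∈ t, c α • b α with hZ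
  have hsplit : Y = Z + ∑ α ∈ Finset.univ.filter (fun α => α ∈ s), c α • b α := by
    rw [hYsum, hZ, ht]
    rw [← Finset.sum_filter_add_sum_filter_not Finset.univ (fun α => α ∉ s)
      (fun α => c α • b α)]
    congr 1
    apply Finset.sum_congr _ (fun _ _ => rfl)
    ext α
    simp [not_not]
  -- ⟨Z, Y⟩ ≤ 0
  have hZY : (inner ℝ Z Y : ℝ) ≤ 0 := by
    rw [hZ, sum_inner]
    apply Finset.sum_nonpos
    intro α hα
    have hαs : α ∉ s := by simpa [ht] using hα
    rw [real_inner_smul_left]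
    have hbY : (inner ℝ (b α) Y : ℝ) ≤ 0 := by
      rw [hYdef, inner_sub_right]
      have := h2 α hαs
      have := hX α
      linarith
    exact mul_nonpos_of_nonneg_of_nonpos (le_of_lt (h3 α hαs)) hbY
  -- ⟨Z, Y - Z⟩ ≥ 0
  have hcross : (0 : ℝ) ≤ inner ℝ Z (∑ α ∈ Finset.univ.filter (fun α => α ∈ s), c α • b α) := by
    rw [hZ, sum_inner]
    apply Finset.sum_nonneg
    intro α hα
    have hαs : α ∉ s := by simpa [ht] using hα
    rw [real_inner_smul_left, inner_sum]
    rw [Finset.mul_sum]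
    apply Finset.sum_nonneg
    intro β hβ
    have hβs : β ∈ s := by simpa using hβ
    rw [real_inner_smul_right]
    have hne : α ≠ β := fun h => hαs (h ▸ hβs)
    have h1' : (inner ℝ (b α) (b β) : ℝ) ≤ 0 := hobtuse α β hne
    have h2' : c β ≤ 0 := h4 β hβs
    have h3' : 0 < c α := h3 α hαs
    exact mul_nonneg h3'.le (mul_nonneg_of_nonpos_of_nonpos h2' h1')
  have hZZ : (inner ℝ Z Z : ℝ) ≤ 0 := by
    have : (inner ℝ Z Y : ℝ) = inner ℝ Z Z +
        inner ℝ Z (∑ α ∈ Finset.univ.filter (fun α => α ∈ s), c α • b α) := by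
      conv_lhs => rw [hsplit]
      rw [inner_add_right]
    linarith
  have hZ0 : Z = 0 := by
    have := real_inner_self_nonneg (x := Z)
    have h0 : (inner ℝ Z Z : ℝ) = 0 := le_antisymm hZZ this
    exact inner_self_eq_zero.mp h0
  -- contradiction: pick α₀ ∉ s, then c α₀ = ⟨w α₀, Z⟩ = 0 but c α₀ > 0
  obtain ⟨α₀, hα₀⟩ := hs
  have hα₀s : α₀ ∉ s := hα₀
  have hwZ : (inner ℝ (w α₀) Z : ℝ) = c α₀ := by
    rw [hZ, inner_sum]
    simp only [real_inner_smul_right, hdual']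
    rw [Finset.sum_eq_single α₀]
    · simp
    · intro β _ hβ; simp [hβ]
    · intro h
      exact absurd (by simp [ht, hα₀s]) h
  rw [hZ0, inner_zero_right] at hwZ
  exact absurd hwZ.symm (ne_of_gt (h3 α₀ hα₀s))
end

section
/- Let V be a finite-dimensional real vector space of dimension ≥ 1, let L ⊂ V be a full-rank lattice, and let C ⊆ V be a nonempty open subset stable under multiplication by positive real scalars. Then C contains a primitive vector of L, i.e. a vector v ∈ L ∩ C such that whenever v = n·w with w ∈ L and n a positive integer, one has n = 1. -/
/-- A nonempty open cone in a finite-dimensional real vector space of dimension ≥ 1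
contains a primitive vector of any full-rank lattice. -/
theorem stmt17 {V : Type*} [NormedAddCommGroup V] [NormedSpace ℝ V]
    [FiniteDimensional ℝ V] (hdim : 1 ≤ Module.finrank ℝ V)
    {ι : Type*} [Fintype ι] (b : Module.Basis ι ℝ V)
    (L : AddSubgroup V) (hL : L = AddSubgroup.closure (Set.range ⇑b))
    (C : Set V) (hC0 : C.Nonempty) (hCopen : IsOpen C)
    (hCcone : ∀ r : ℝ, 0 < r → ∀ x ∈ C, r • x ∈ C) :
    ∃ v ∈ L, v ∈ C ∧ ∀ (w : V) (n : ℕ), w ∈ L → 0 < n → v = n • w → n = 1 := by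
  classical
  have hnt : Nontrivial V := Module.nontrivial_of_finrank_pos (R := ℝ) (by omega)
  -- membership in L in terms of the ℤ-span
  have hmemL : ∀ x : V, x ∈ L ↔ x ∈ Submodule.span ℤ (Set.range ⇑b) := by
    intro x
    rw [hL, ← Submodule.span_int_eq_addSubgroupClosure]
    rfl
  have hrepr : ∀ x ∈ L, ∀ i, ∃ k : ℤ, (k : ℝ) = b.repr x i := by
    intro x hx i
    obtain ⟨k, hk⟩ := (b.mem_span_iff_repr_mem ℤ x).mp ((hmemL x).mp hx) i
    exact ⟨k, by exact_mod_cast hk⟩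
  -- covering constant
  set R : ℝ := ∑ i, ‖b i‖ / 2 with hRdef
  have hR0 : 0 ≤ R := Finset.sum_nonneg fun i _ => by positivity
  have hcover : ∀ y : V, ∃ v ∈ L, ‖y - v‖ ≤ R := by
    intro y
    refine ⟨∑ i, ((round (b.repr y i) : ℤ) : ℝ) • b i, ?_, ?_⟩
    · rw [hL]
      refine AddSubgroup.sum_mem _ fun i _ => ?_
      rw [Int.cast_smul_eq_zsmul]
      exact AddSubgroup.zsmul_mem _ (AddSubgroup.subset_closure (Set.mem_range_self i)) _
    · have hy : y = ∑ i, b.repr y i • b i := (b.sum_repr y).symm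
      have hdiff : y - ∑ i, ((round (b.repr y i) : ℤ) : ℝ) • b i
          = ∑ i, (b.repr y i - ((round (b.repr y i) : ℤ) : ℝ)) • b i := by
        nth_rewrite 1 [hy]
        rw [← Finset.sum_sub_distrib]
        exact Finset.sum_congr rfl fun i _ => (sub_smul _ _ _).symm
      rw [hdiff]
      calc ‖∑ i, (b.repr y i - ((round (b.repr y i) : ℤ) : ℝ)) • b i‖
          ≤ ∑ i, ‖(b.repr y i - ((round (b.repr y i) : ℤ) : ℝ)) • b i‖ :=
            norm_sum_le _ _
        _ ≤ ∑ i, ‖b i‖ / 2 := by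
            refine Finset.sum_le_sum fun i _ => ?_
            rw [norm_smul, Real.norm_eq_abs]
            calc |b.repr y i - ((round (b.repr y i) : ℤ) : ℝ)| * ‖b i‖
                ≤ (1 / 2) * ‖b i‖ := by
                  gcongr
                  exact abs_sub_round _
              _ = ‖b i‖ / 2 := by ring
  -- a nonzero point of C
  have hdense : Dense ({(0 : V)}ᶜ : Set V) := by
    have := Module.punctured_nhds_neBot ℝ V (0 : V)
    exact dense_compl_singleton 0
  obtain ⟨x', hx'0, hx'C⟩ := hdense.exists_mem_open hCopen hC0
  rw [Set.mem_compl_iff, Set.mem_singleton_iff] at hx'0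
  obtain ⟨δ, hδ0, hball⟩ := Metric.isOpen_iff.mp hCopen x' hx'C
  set ε : ℝ := min δ (‖x'‖ / 2) with hεdef
  have hx'norm : 0 < ‖x'‖ := norm_pos_iff.mpr hx'0
  have hε0 : 0 < ε := lt_min hδ0 (by positivity)
  have hballC : Metric.ball x' ε ⊆ C :=
    (Metric.ball_subset_ball (min_le_left _ _)).trans hball
  set r : ℝ := (R + 1) / ε with hrdef
  have hr0 : 0 < r := by positivity
  have hrε : r * ε = R + 1 := div_mul_cancel₀ _ hε0.ne'
  obtain ⟨v, hvL, hvd⟩ := hcover (r • x')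
  -- v is in C
  have hinv : r⁻¹ • v ∈ Metric.ball x' ε := by
    rw [Metric.mem_ball, dist_eq_norm]
    have h1 : r⁻¹ • v - x' = r⁻¹ • (v - r • x') := by
      rw [smul_sub, smul_smul, inv_mul_cancel₀ hr0.ne', one_smul]
    rw [h1, norm_smul, norm_inv, Real.norm_of_nonneg hr0.le]
    have h2 : ‖v - r • x'‖ ≤ R := by rwa [norm_sub_rev]
    calc r⁻¹ * ‖v - r • x'‖ ≤ r⁻¹ * R := by gcongr
      _ < r⁻¹ * (r * ε) := by
          rw [hrε]
          exact mul_lt_mul_of_pos_left (lt_add_one R) (inv_pos.mpr hr0)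
      _ = ε := by rw [← mul_assoc, inv_mul_cancel₀ hr0.ne', one_mul]
  have hvC : v ∈ C := by
    have : v = r • (r⁻¹ • v) := by
      rw [smul_smul, mul_inv_cancel₀ hr0.ne', one_smul]
    rw [this]
    exact hCcone r hr0 _ (hballC hinv)
  -- v is nonzero
  have hv0 : v ≠ 0 := by
    have h1 : ‖r • x'‖ - ‖v‖ ≤ ‖r • x' - v‖ := norm_sub_norm_le _ _
    have h2 : ‖r • x'‖ = r * ‖x'‖ := by
      rw [norm_smul, Real.norm_of_nonneg hr0.le]
    have h3 : 2 * ε ≤ ‖x'‖ := by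
      have := min_le_right δ (‖x'‖ / 2)
      have : ε ≤ ‖x'‖ / 2 := this
      linarith
    have h4 : 2 * (R + 1) ≤ r * ‖x'‖ := by
      calc 2 * (R + 1) = r * (2 * ε) := by rw [mul_comm 2 ε, ← mul_assoc, hrε]; ring
        _ ≤ r * ‖x'‖ := by gcongr
    have h5 : 0 < ‖v‖ := by
      have := hvd
      rw [h2] at h1
      linarith
    exact norm_pos_iff.mp h5
  -- coordinate bound for divisors
  have hrv : b.repr v ≠ 0 := fun h => hv0 (by simpa using congrArg b.repr.symm h)
  obtain ⟨i, hi⟩ : ∃ i, b.repr v i ≠ 0 := by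
    by_contra h
    push_neg at h
    exact hrv (Finsupp.ext h)
  obtain ⟨k, hk⟩ := hrepr v hvL i
  have hk0 : k ≠ 0 := by
    intro h
    rw [h] at hk
    exact hi (by exact_mod_cast hk.symm)
  -- the divisibility predicate
  set P : ℕ → Prop := fun n => 0 < n ∧ ∃ w ∈ L, v = n • w with hPdef
  have hPbound : ∀ n, P n → n ≤ k.natAbs := by
    rintro n ⟨hn, w, hwL, hvw⟩
    obtain ⟨j, hj⟩ := hrepr w hwL i
    have hco : (k : ℝ) = (n : ℝ) * (j : ℝ) := by
      rw [hk, hvw]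
      have : ((n : ℕ) • w : V) = (n : ℝ) • w := by
        rw [Nat.cast_smul_eq_nsmul]
      rw [this, map_smul]
      simp [hj]
    have hkz : k = (n : ℤ) * j := by exact_mod_cast hco
    have hj0 : j ≠ 0 := by
      intro h
      apply hk0
      rw [hkz, h, mul_zero]
    have hdvd : n ∣ k.natAbs := by
      have : (n : ℤ) ∣ k := ⟨j, hkz⟩
      simpa using Int.natAbs_dvd_natAbs.mpr this
    exact Nat.le_of_dvd (Int.natAbs_pos.mpr hk0) hdvd
  have hP1 : P 1 := ⟨one_pos, v, hvL, (one_smul ℕ v).symm⟩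
  have hkpos : 1 ≤ k.natAbs := Int.natAbs_pos.mpr hk0
  set N : ℕ := Nat.findGreatest P k.natAbs with hNdef
  have hPN : P N := Nat.findGreatest_spec hkpos hP1
  obtain ⟨hN0, w, hwL, hvw⟩ := hPN
  have hwC : w ∈ C := by
    have hNR : (0 : ℝ) < (N : ℝ) := by exact_mod_cast hN0
    have h1 : w = (N : ℝ)⁻¹ • v := by
      rw [hvw, ← Nat.cast_smul_eq_nsmul ℝ, smul_smul, inv_mul_cancel₀ hNR.ne', one_smul]
    rw [h1]
    exact hCcone _ (inv_pos.mpr hNR) _ hvC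
  refine ⟨w, hwL, hwC, ?_⟩
  intro u m huL hm hwu
  have hPNm : P (N * m) := by
    refine ⟨Nat.mul_pos hN0 hm, u, huL, ?_⟩
    rw [hvw, hwu, ← mul_smul]
  have hle : N * m ≤ N := Nat.le_findGreatest (hPbound _ hPNm) hPNm
  have : m ≤ 1 := by
    by_contra h
    push_neg at h
    nlinarith [hN0, hle]
  omega
end
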